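/- Let T : ℝ → ℝ be defined by T(x) = x/(1-x) if x ≤ 1/2 and T(x) = (2x-1)/x if x > 1/2, and for b ≥ 1 let φ_b = (√(b²+4) - b)/2. The period-2b orbit of φ_b under T consists of the following quadratic irrationals: T^[j](φ_b) = φ_b/(1 - j·φ_b) for every j with 0 ≤ j ≤ b-1; T^[b](φ_b) = 1 - φ_b; and T^[b+j](φ_b) = (1 - (j+1)·φ_b)/(1 - j·φ_b) for every j with 1 ≤ j ≤ b-1. -/

import Mathlib

noncomputable def T : ℝ → ℝ := fun x => if x ≤ 1/2 then x / (1 - x) else (2*x - 1) / x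

theorem stmt8 (b : ℕ) (hb : 1 ≤ b) :
    let φ : ℝ := (Real.sqrt ((b : ℝ)^2 + 4) - b) / 2
    (∀ j : ℕ, j ≤ b - 1 → T^[j] φ = φ / (1 - (j : ℝ) * φ)) ∧
    T^[b] φ = 1 - φ ∧
    (∀ j : ℕ, 1 ≤ j → j ≤ b - 1 →
      T^[b + j] φ = (1 - ((j : ℝ) + 1) * φ) / (1 - (j : ℝ) * φ)) := by
  intro φ
  have hB : (1:ℝ) ≤ (b:ℝ) := by exact_mod_cast hb
  have hs : Real.sqrt ((b:ℝ)^2 + 4) ^ 2 = (b:ℝ)^2 + 4 := Real.sq_sqrt (by positivity)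
  have hsgt : (b:ℝ) < Real.sqrt ((b:ℝ)^2 + 4) := by
    nlinarith [Real.sqrt_nonneg ((b:ℝ)^2 + 4)]
  have hφ : 0 < φ := by
    show 0 < (Real.sqrt ((b : ℝ)^2 + 4) - b) / 2
    linarith
  have hkey : φ^2 + (b:ℝ)*φ = 1 := by
    show ((Real.sqrt ((b : ℝ)^2 + 4) - b) / 2)^2
        + (b:ℝ) * ((Real.sqrt ((b : ℝ)^2 + 4) - b) / 2) = 1
    nlinarith [hs]
  have hφ1 : φ < 1 := by nlinarith
  clear_value φ
  have hden : ∀ j : ℕ, j ≤ b → 0 < 1 - (j:ℝ)*φ := by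
    intro j hj
    have : (j:ℝ) ≤ (b:ℝ) := by exact_mod_cast hj
    nlinarith
  have part1 : ∀ j : ℕ, j ≤ b - 1 → T^[j] φ = φ / (1 - (j:ℝ)*φ) := by
    intro j hj
    induction j with
    | zero => simp
    | succ n ih =>
      have hn : n ≤ b - 1 := Nat.le_of_succ_le hj
      have hnb : n + 2 ≤ b := by omega
      have hnb' : ((n:ℝ) + 2) ≤ (b:ℝ) := by exact_mod_cast hnb
      have hd : 0 < 1 - (n:ℝ)*φ := hden n (by omega)
      have hd' : 0 < 1 - ((n:ℝ)+1)*φ := by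
        have := hden (n+1) (by omega); push_cast at this; linarith
      rw [Function.iterate_succ_apply', ih hn]
      have hle : φ / (1 - (n:ℝ)*φ) ≤ 1/2 := by
        rw [div_le_div_iff₀ hd (by norm_num)]
        nlinarith
      show T (φ / (1 - (n:ℝ)*φ)) = φ / (1 - ((n+1 : ℕ):ℝ)*φ)
      rw [T]
      simp only [if_pos hle]
      push_cast
      have hx : 0 < 1 - φ / (1 - (n:ℝ)*φ) := by
        rw [sub_pos, div_lt_one hd]; linarith
      rw [div_eq_div_iff hx.ne' hd'.ne']
      field_simp
      have hd0 : 1 - φ * (n:ℝ) ≠ 0 := by intro h; nlinarith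
      rw [eq_sub_iff_add_eq, ← add_div, div_eq_one_iff_eq hd0]; ring
  have part2 : T^[b] φ = 1 - φ := by
    obtain ⟨m, rfl⟩ : ∃ m, b = m + 1 := ⟨b - 1, by omega⟩
    have hm : T^[m] φ = φ / (1 - (m:ℝ)*φ) := part1 m (by omega)
    rw [Function.iterate_succ_apply', hm]
    have hmB : (m:ℝ) = ((m+1:ℕ):ℝ) - 1 := by push_cast; ring
    have hden1 : 1 - (m:ℝ)*φ = φ^2 + φ := by
      push_cast at hkey ⊢; nlinarith
    have hx : φ / (1 - (m:ℝ)*φ) = 1 / (1 + φ) := by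
      rw [hden1]; field_simp; ring
    rw [hx]
    have hgt : ¬ (1 / (1 + φ) ≤ 1/2) := by
      push_neg
      rw [div_lt_div_iff₀ (by norm_num) (by linarith)]
      linarith
    rw [T]
    simp only [if_neg hgt]
    field_simp
    ring
  refine ⟨part1, part2, ?_⟩
  intro j hj1 hjb
  induction j with
  | zero => omega
  | succ n ih =>
    rcases Nat.eq_or_lt_of_le hj1 with h1 | h1
    · -- n + 1 = 1, so n = 0 : base case
      have hn0 : n = 0 := by omega
      subst hn0
      have hb2 : 2 ≤ b := by omega
      have hb2' : (2:ℝ) ≤ (b:ℝ) := by exact_mod_cast hb2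
      have h2φ : 2*φ < 1 := by nlinarith
      rw [show b + 1 = b + 1 from rfl, Function.iterate_succ_apply']
      have hTb : T^[b] φ = 1 - φ := part2
      rw [hTb]
      have hgt : ¬ (1 - φ ≤ 1/2) := by push_neg; linarith
      rw [T]
      simp only [if_neg hgt]
      push_cast
      have h1φ : (1:ℝ) - φ ≠ 0 := by linarith
      field_simp
      ring
    · have hn1 : 1 ≤ n := by omega
      have hnb : n ≤ b - 1 := Nat.le_of_succ_le hjb
      have hnb2 : n + 2 ≤ b := by omega
      have hnb2' : ((n:ℝ) + 2) ≤ (b:ℝ) := by exact_mod_cast hnb2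
      have ihv := ih hn1 hnb
      have hd : 0 < 1 - (n:ℝ)*φ := hden n (by omega)
      have hd' : 0 < 1 - ((n:ℝ)+1)*φ := by
        have := hden (n+1) (by omega); push_cast at this; linarith
      have hstep : b + (n+1) = (b + n) + 1 := by omega
      rw [hstep, Function.iterate_succ_apply', ihv]
      have hgt : ¬ ((1 - ((n:ℝ)+1)*φ) / (1 - (n:ℝ)*φ) ≤ 1/2) := by
        push_neg
        rw [div_lt_div_iff₀ (by norm_num) hd]
        nlinarith
      show T ((1 - ((n:ℝ)+1)*φ) / (1 - (n:ℝ)*φ))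
          = (1 - (((n+1:ℕ):ℝ)+1)*φ) / (1 - ((n+1:ℕ):ℝ)*φ)
      rw [T]
      simp only [if_neg hgt]
      push_cast
      rw [div_eq_div_iff (div_pos hd' hd).ne' hd'.ne']
      field_simp
      ring
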